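/- If K is complete with respect to C (convex bodies in R^n), then the joint chain holds: (1+s(K))·r(K,−C) ≤ r(K,−C) + R(K,C) ≤ ((1+s(K))/s(K))·R(K,C) ≤ s(C)·r(K,C) + R(K,C) ≤ (1/2)(1+s(C))·D(K,C). -/

import Mathlib

open Pointwise

/-- A convex body: compact, convex, with nonempty interior. -/
def IsBody {n : ℕ} (K : Set (Fin n → ℝ)) : Prop :=
  Convex ℝ K ∧ IsCompact K ∧ (interior K).Nonempty

/-- Circumradius of `K` w.r.t. `C`: smallest `ρ > 0` with `K` contained in a translate of `ρ • C`. -/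
noncomputable def circR {n : ℕ} (K C : Set (Fin n → ℝ)) : ℝ :=
  sInf {ρ : ℝ | 0 < ρ ∧ ∃ t : Fin n → ℝ, K ⊆ t +ᵥ ρ • C}

/-- Inradius of `K` w.r.t. `C`: largest `ρ ≥ 0` with a translate of `ρ • C` inside `K`. -/
noncomputable def inrad {n : ℕ} (K C : Set (Fin n → ℝ)) : ℝ :=
  sSup {ρ : ℝ | 0 ≤ ρ ∧ ∃ t : Fin n → ℝ, t +ᵥ ρ • C ⊆ K}

/-- Minkowski asymmetry `s(K) = R(-K, K)`. -/
noncomputable def asym {n : ℕ} (K : Set (Fin n → ℝ)) : ℝ := circR (-K) K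

/-- Diameter of `K` w.r.t. `C`: twice the maximal circumradius of a segment with endpoints in `K`. -/
noncomputable def diamC {n : ℕ} (K C : Set (Fin n → ℝ)) : ℝ :=
  sSup {d : ℝ | ∃ x ∈ K, ∃ y ∈ K, d = 2 * circR (segment ℝ x y) C}

/-- `K` is (diametrically) complete w.r.t. `C`. -/
def IsDiamComplete {n : ℕ} (K C : Set (Fin n → ℝ)) : Prop :=
  ∀ K' : Set (Fin n → ℝ), IsBody K' → K ⊂ K' → diamC K C < diamC K' C

/-- `S` is an `n`-simplex: convex hull of `n+1` affinely independent points. -/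
def IsSimplexBody {n : ℕ} (S : Set (Fin n → ℝ)) : Prop :=
  ∃ p : Fin (n + 1) → (Fin n → ℝ), AffineIndependent ℝ p ∧ S = convexHull ℝ (Set.range p)

/-- Support function of `C`. -/
noncomputable def supp {n : ℕ} (C : Set (Fin n → ℝ)) (a : Fin n → ℝ) : ℝ :=
  sSup {r : ℝ | ∃ x ∈ C, r = dotProduct a x}

/-- `A ⊆ₜ B`: `A` is contained in some translate of `B`. -/
def SubsetT {n : ℕ} (A B : Set (Fin n → ℝ)) : Prop := ∃ t : Fin n → ℝ, A ⊆ t +ᵥ B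

namespace Stmt11Aux

open Set Metric Bornology Filter

variable {n : ℕ}

/-- admissible circumradius factors -/
def Acirc (K C : Set (Fin n → ℝ)) : Set ℝ :=
  {ρ : ℝ | 0 < ρ ∧ ∃ t : Fin n → ℝ, K ⊆ t +ᵥ ρ • C}

/-- admissible inradius factors -/
def Ainr (K C : Set (Fin n → ℝ)) : Set ℝ :=
  {ρ : ℝ | 0 ≤ ρ ∧ ∃ t : Fin n → ℝ, t +ᵥ ρ • C ⊆ K}

lemma circR_eq (K C : Set (Fin n → ℝ)) : circR K C = sInf (Acirc K C) := rfl

lemma inrad_eq (K C : Set (Fin n → ℝ)) : inrad K C = sSup (Ainr K C) := rfl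

lemma acirc_bddBelow (K C : Set (Fin n → ℝ)) : BddBelow (Acirc K C) :=
  ⟨0, fun _ h => h.1.le⟩

lemma circR_nonneg (K C : Set (Fin n → ℝ)) : 0 ≤ circR K C :=
  Real.sInf_nonneg fun _ h => h.1.le

lemma inrad_nonneg (K C : Set (Fin n → ℝ)) : 0 ≤ inrad K C :=
  Real.sSup_nonneg fun _ h => h.1

lemma mem_tr {t x : Fin n → ℝ} {ρ : ℝ} {S : Set (Fin n → ℝ)} :
    x ∈ t +ᵥ ρ • S ↔ ∃ c ∈ S, x = t + ρ • c := by
  constructor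
  · intro h
    rcases Set.mem_vadd_set.mp h with ⟨y, hy, hxy⟩
    rcases Set.mem_smul_set.mp hy with ⟨c, hc, rfl⟩
    exact ⟨c, hc, by rw [← hxy]; rfl⟩
  · rintro ⟨c, hc, rfl⟩
    exact Set.mem_vadd_set.mpr ⟨ρ • c, Set.smul_mem_smul_set hc, rfl⟩

lemma body_nonempty {K : Set (Fin n → ℝ)} (hK : IsBody K) : K.Nonempty := by
  obtain ⟨x, hx⟩ := hK.2.2
  exact ⟨x, interior_subset hx⟩

lemma body_ball {C : Set (Fin n → ℝ)} (hC : IsBody C) :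
    ∃ c0 δ, 0 < δ ∧ ball c0 δ ⊆ C := by
  obtain ⟨c0, hc0⟩ := hC.2.2
  obtain ⟨δ, hδ, hball⟩ := Metric.isOpen_iff.mp isOpen_interior c0 hc0
  exact ⟨c0, δ, hδ, hball.trans interior_subset⟩

lemma bounded_norm_bound {K : Set (Fin n → ℝ)} (hK : IsBounded K) :
    ∃ M, 0 < M ∧ ∀ x ∈ K, ‖x‖ ≤ M := by
  obtain ⟨M, hM⟩ := isBounded_iff_forall_norm_le.mp hK
  exact ⟨|M| + 1, by positivity,
    fun x hx => (hM x hx).trans ((le_abs_self M).trans (by linarith))⟩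

lemma acirc_nonempty {A C : Set (Fin n → ℝ)} (hA : IsBounded A) (hC : IsBody C) :
    (Acirc A C).Nonempty := by
  obtain ⟨c0, δ, hδ, hball⟩ := body_ball hC
  obtain ⟨M, hM0, hM⟩ := bounded_norm_bound hA
  have hρ : (0:ℝ) < (M + 1) / δ := by positivity
  refine ⟨(M + 1) / δ, hρ, -(((M + 1) / δ) • c0), fun x hx => mem_tr.mpr
    ⟨c0 + ((M + 1) / δ)⁻¹ • x, hball ?_, ?_⟩⟩
  · rw [mem_ball, dist_eq_norm, add_sub_cancel_left, norm_smul]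
    have h1 : |((M + 1) / δ)⁻¹| = δ / (M + 1) := by
      rw [abs_of_pos (by positivity), inv_div]
    rw [Real.norm_eq_abs, h1, div_mul_eq_mul_div, div_lt_iff₀ (by positivity)]
    nlinarith [hM x hx, norm_nonneg x]
  · rw [smul_add, smul_smul, mul_inv_cancel₀ (ne_of_gt hρ), one_smul]
    abel

lemma ainr_zero_mem {K C : Set (Fin n → ℝ)} (hK : K.Nonempty) (hC : C.Nonempty) :
    0 ∈ Ainr K C := by
  obtain ⟨t, ht⟩ := hK
  refine ⟨le_refl 0, t, ?_⟩
  intro x hx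
  rcases mem_tr.mp hx with ⟨c, _, rfl⟩
  simpa using ht

lemma ainr_bddAbove (hn : 0 < n) {K C : Set (Fin n → ℝ)} (hK : IsBody K)
    {c0 : Fin n → ℝ} {δ : ℝ} (hδ : 0 < δ) (hball : ball c0 δ ⊆ C) :
    BddAbove (Ainr K C) := by
  obtain ⟨M, hM0, hM⟩ := bounded_norm_bound hK.2.1.isBounded
  haveI : Nonempty (Fin n) := ⟨⟨0, hn⟩⟩
  refine ⟨4 * M / δ, fun ρ hρ => ?_⟩
  obtain ⟨hρ0, t, ht⟩ := hρ
  rcases eq_or_lt_of_le hρ0 with h0 | h0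
  · rw [← h0]; positivity
  · set e : Fin n → ℝ := fun _ => 1 with he
    have hne : ‖e‖ = 1 := by rw [he, pi_norm_const]; norm_num
    have h1 : t + ρ • c0 ∈ K := ht (mem_tr.mpr ⟨c0, hball (mem_ball_self hδ), rfl⟩)
    have h2 : t + ρ • (c0 + (δ/2) • e) ∈ K := by
      refine ht (mem_tr.mpr ⟨c0 + (δ/2) • e, hball ?_, rfl⟩)
      rw [mem_ball, dist_eq_norm, add_sub_cancel_left, norm_smul, hne, Real.norm_eq_abs, abs_of_pos (by positivity)]
      linarith
    have hdiff : ‖(t + ρ • (c0 + (δ/2) • e)) - (t + ρ • c0)‖ = ρ * (δ/2) := by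
      have : (t + ρ • (c0 + (δ/2) • e)) - (t + ρ • c0) = ρ • ((δ/2) • e) := by
        rw [smul_add]; abel
      rw [this, norm_smul, norm_smul, hne, Real.norm_eq_abs, Real.norm_eq_abs, abs_of_pos h0, abs_of_pos (by positivity)]
      ring
    have hb : ‖(t + ρ • (c0 + (δ/2) • e)) - (t + ρ • c0)‖ ≤ 2 * M :=
      (norm_sub_le _ _).trans (by linarith [hM _ h1, hM _ h2])
    rw [hdiff] at hb
    rw [le_div_iff₀ hδ]
    nlinarith

lemma one_le_of_mem_asym (hn : 0 < n) {X : Set (Fin n → ℝ)} (hX : IsBody X)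
    {ρ : ℝ} (hρ : ρ ∈ Acirc (-X) X) : 1 ≤ ρ := by
  haveI : Nonempty (Fin n) := ⟨⟨0, hn⟩⟩
  obtain ⟨x0, δ, hδ, hball⟩ := body_ball hX
  obtain ⟨hρ0, t, ht⟩ := hρ
  set e : Fin n → ℝ := fun _ => 1 with he
  have hne : ‖e‖ = 1 := by rw [he, pi_norm_const]; norm_num
  have hx1 : x0 ∈ X := hball (mem_ball_self hδ)
  have hx2 : x0 + (δ/2) • e ∈ X := by
    refine hball ?_
    rw [mem_ball, dist_eq_norm, add_sub_cancel_left, norm_smul, hne,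
      Real.norm_eq_abs, abs_of_pos (by positivity)]
    linarith
  have hdpos : 0 < Metric.diam X := by
    have h1 : dist (x0 + (δ/2) • e) x0 = δ/2 := by
      rw [dist_eq_norm, add_sub_cancel_left, norm_smul, hne,
        Real.norm_eq_abs, abs_of_pos (by positivity)]
      ring
    have := Metric.dist_le_diam_of_mem hX.2.1.isBounded hx2 hx1
    rw [h1] at this; linarith
  have hkey : Metric.diam X ≤ ρ * Metric.diam X := by
    refine Metric.diam_le_of_forall_dist_le (by positivity) fun x hx y hy => ?_
    obtain ⟨x', hx', hxe⟩ := mem_tr.mp (ht (Set.neg_mem_neg.mpr hx))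
    obtain ⟨y', hy', hye⟩ := mem_tr.mp (ht (Set.neg_mem_neg.mpr hy))
    have : x - y = ρ • (y' - x') := by
      have : -x - -y = (t + ρ • x') - (t + ρ • y') := by rw [← hxe, ← hye]
      rw [smul_sub]
      have h2 : -x + y = ρ • x' - ρ • y' := by
        calc -x + y = -x - -y := by abel
        _ = (t + ρ • x') - (t + ρ • y') := this
        _ = ρ • x' - ρ • y' := by abel
      calc x - y = -(-x + y) := by abel
      _ = -(ρ • x' - ρ • y') := by rw [h2]
      _ = ρ • y' - ρ • x' := by abel
    rw [dist_eq_norm, this, norm_smul, Real.norm_eq_abs, abs_of_pos hρ0]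
    have := Metric.dist_le_diam_of_mem hX.2.1.isBounded hy' hx'
    rw [dist_eq_norm] at this
    nlinarith
  nlinarith

lemma one_le_asym (hn : 0 < n) {X : Set (Fin n → ℝ)} (hX : IsBody X) : 1 ≤ asym X :=
  le_csInf (acirc_nonempty hX.2.1.neg.isBounded hX) fun ρ hρ =>
    one_le_of_mem_asym hn hX hρ

lemma asym_pos (hn : 0 < n) {X : Set (Fin n → ℝ)} (hX : IsBody X) : 0 < asym X :=
  lt_of_lt_of_le one_pos (one_le_asym hn hX)

/-- Key general inequality: `asym K * inrad K (-C) ≤ circR K C`, in the form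
`inrad K (-C) ≤ circR K C / asym K`. -/
lemma inrad_neg_le (hn : 0 < n) {K C : Set (Fin n → ℝ)} (hK : IsBody K) (hC : IsBody C) :
    inrad K (-C) ≤ circR K C / asym K := by
  have hs1 : 1 ≤ asym K := one_le_asym hn hK
  have hRne : (Acirc K C).Nonempty := acirc_nonempty hK.2.1.isBounded hC
  refine csSup_le ⟨0, ainr_zero_mem (body_nonempty hK) (body_nonempty hC).neg⟩
    fun ρ hρ => ?_
  obtain ⟨hρ0, a, ha⟩ := hρ
  rcases eq_or_lt_of_le hρ0 with h0 | h0
  · rw [← h0]; exact div_nonneg (circR_nonneg K C) (by linarith)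
  -- for positive admissible inradius factor: asym K * ρ ≤ circR K C
  have key : asym K * ρ ≤ circR K C := by
    refine le_csInf hRne fun ρ' hρ' => ?_
    obtain ⟨hρ'0, t', ht'⟩ := hρ'
    have hmem : ρ' / ρ ∈ Acirc (-K) K := by
      refine ⟨by positivity, -t' - (ρ'/ρ) • a, fun z hz => ?_⟩
      have hk : -z ∈ K := Set.mem_neg.mp hz
      obtain ⟨c, hc, hce⟩ := mem_tr.mp (ht' hk)
      have hmemK : a + ρ • (-c) ∈ K := ha (mem_tr.mpr ⟨-c, Set.neg_mem_neg.mpr hc, rfl⟩)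
      refine mem_tr.mpr ⟨a + ρ • (-c), hmemK, ?_⟩
      have hz' : z = -t' - ρ' • c := by
        have h4 : z = -(-z) := by abel
        rw [h4, hce]; abel
      rw [hz', smul_add, smul_smul, div_mul_cancel₀ _ (ne_of_gt h0)]
      module
    have h3 : asym K ≤ ρ' / ρ := csInf_le (acirc_bddBelow (-K) K) hmem
    replace this := h3
    calc asym K * ρ ≤ (ρ' / ρ) * ρ := by nlinarith
    _ = ρ' := by field_simp
  have h2 : ρ ≤ circR K C / asym K := by
    rw [le_div_iff₀ (by linarith)]
    nlinarith
  exact h2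

/-! ### The gauge of the difference body -/

/-- admissible factors for the gauge of `v` w.r.t. the difference body `C - C` -/
def ggs (C : Set (Fin n → ℝ)) (v : Fin n → ℝ) : Set ℝ :=
  {ρ : ℝ | 0 < ρ ∧ v ∈ ρ • (C - C)}

/-- gauge of `v` w.r.t. the difference body `C - C` -/
noncomputable def gg (C : Set (Fin n → ℝ)) (v : Fin n → ℝ) : ℝ := sInf (ggs C v)

variable {C : Set (Fin n → ℝ)}

lemma zero_mem_sub (hC : IsBody C) : (0 : Fin n → ℝ) ∈ C - C := by
  obtain ⟨c, hc⟩ := body_nonempty hC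
  simpa using Set.sub_mem_sub hc hc

lemma neg_mem_sub {b : Fin n → ℝ} (hb : b ∈ C - C) : -b ∈ C - C := by
  obtain ⟨c1, hc1, c2, hc2, rfl⟩ := Set.mem_sub.mp hb
  exact Set.mem_sub.mpr ⟨c2, hc2, c1, hc1, by abel⟩

lemma sub_convex (hC : IsBody C) : Convex ℝ (C - C) := hC.1.sub hC.1

lemma sub_compact (hC : IsBody C) : IsCompact (C - C) := by
  have : C - C = (fun p : (Fin n → ℝ) × (Fin n → ℝ) => p.1 - p.2) '' (C ×ˢ C) := by
    ext z
    simp only [Set.mem_sub, Set.mem_image, Set.mem_prod, Prod.exists]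
    tauto
  rw [this]
  exact (hC.2.1.prod hC.2.1).image (continuous_fst.sub continuous_snd)

lemma ball_subset_sub (hC : IsBody C) :
    ∃ δ, 0 < δ ∧ ball (0 : Fin n → ℝ) δ ⊆ C - C := by
  obtain ⟨c0, δ, hδ, hball⟩ := body_ball hC
  refine ⟨δ, hδ, fun w hw => ?_⟩
  have h1 : c0 + w ∈ C := hball (by
    rw [mem_ball, dist_eq_norm, add_sub_cancel_left]
    simpa [mem_ball, dist_eq_norm] using hw)
  have h2 : c0 ∈ C := hball (mem_ball_self hδ)
  simpa using Set.sub_mem_sub h1 h2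

lemma ggs_nonempty (hC : IsBody C) (v : Fin n → ℝ) : (ggs C v).Nonempty := by
  obtain ⟨δ, hδ, hball⟩ := ball_subset_sub hC
  have hρ : (0:ℝ) < (‖v‖ + 1) / δ := by positivity
  refine ⟨(‖v‖ + 1) / δ, hρ, Set.mem_smul_set.mpr ⟨((‖v‖ + 1) / δ)⁻¹ • v, hball ?_, ?_⟩⟩
  · rw [mem_ball, dist_eq_norm, sub_zero, norm_smul, Real.norm_eq_abs,
      abs_of_pos (by positivity), inv_div, div_mul_eq_mul_div, div_lt_iff₀ (by positivity)]
    nlinarith [norm_nonneg v]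
  · rw [smul_smul, mul_inv_cancel₀ (ne_of_gt hρ), one_smul]

lemma ggs_bddBelow (C : Set (Fin n → ℝ)) (v : Fin n → ℝ) : BddBelow (ggs C v) :=
  ⟨0, fun _ h => h.1.le⟩

lemma gg_nonneg (C : Set (Fin n → ℝ)) (v : Fin n → ℝ) : 0 ≤ gg C v :=
  Real.sInf_nonneg fun _ h => h.1.le

lemma gg_le_of_mem {α : ℝ} {v : Fin n → ℝ} (hα : 0 < α) (h : v ∈ α • (C - C)) :
    gg C v ≤ α := csInf_le (ggs_bddBelow C v) ⟨hα, h⟩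

lemma mem_smul_sub_of_le (hC : IsBody C) {ρ τ : ℝ} {v : Fin n → ℝ}
    (hρ : 0 < ρ) (hle : ρ ≤ τ) (h : v ∈ ρ • (C - C)) : v ∈ τ • (C - C) := by
  obtain ⟨b, hb, rfl⟩ := Set.mem_smul_set.mp h
  have hτ : 0 < τ := lt_of_lt_of_le hρ hle
  refine Set.mem_smul_set.mpr ⟨(ρ/τ) • b, ?_, ?_⟩
  · have := (sub_convex hC) hb (zero_mem_sub hC) (by positivity : (0:ℝ) ≤ ρ/τ)
      (by rw [sub_nonneg, div_le_one hτ]; exact hle : (0:ℝ) ≤ 1 - ρ/τ) (by ring)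
    simpa using this
  · rw [smul_smul, mul_div_cancel₀ _ (ne_of_gt hτ)]

lemma mem_of_gg_le (hC : IsBody C) {α : ℝ} {v : Fin n → ℝ}
    (hα : 0 < α) (h : gg C v ≤ α) : v ∈ α • (C - C) := by
  have hseq : ∀ k : ℕ, (α + ((k:ℝ)+1)⁻¹)⁻¹ • v ∈ C - C := by
    intro k
    have hk : (0:ℝ) < ((k:ℝ)+1)⁻¹ := by positivity
    have hlt : gg C v < α + ((k:ℝ)+1)⁻¹ := lt_of_le_of_lt h (by linarith)
    obtain ⟨ρ, hρmem, hρlt⟩ := exists_lt_of_csInf_lt (ggs_nonempty hC v) hlt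
    have hmem : v ∈ (α + ((k:ℝ)+1)⁻¹) • (C - C) :=
      mem_smul_sub_of_le hC hρmem.1 hρlt.le hρmem.2
    obtain ⟨b, hb, hbe⟩ := Set.mem_smul_set.mp hmem
    rw [← hbe, inv_smul_smul₀ (by positivity)]
    exact hb
  have htend : Tendsto (fun k : ℕ => (α + ((k:ℝ)+1)⁻¹)⁻¹ • v) atTop (nhds (α⁻¹ • v)) := by
    have h1 : Tendsto (fun k : ℕ => ((k:ℝ)+1)⁻¹) atTop (nhds 0) := by
      have := tendsto_natCast_atTop_atTop (R := ℝ)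
      exact tendsto_inv_atTop_zero.comp (tendsto_atTop_add_const_right _ 1 this)
    have h2 : Tendsto (fun k : ℕ => α + ((k:ℝ)+1)⁻¹) atTop (nhds α) := by
      simpa using tendsto_const_nhds.add h1
    exact ((h2.inv₀ (ne_of_gt hα)).smul_const v)
  have hmem : α⁻¹ • v ∈ C - C :=
    (sub_compact hC).isClosed.mem_of_tendsto htend (Eventually.of_forall hseq)
  refine Set.mem_smul_set.mpr ⟨α⁻¹ • v, hmem, ?_⟩
  rw [smul_smul, mul_inv_cancel₀ (ne_of_gt hα), one_smul]

lemma gg_neg (C : Set (Fin n → ℝ)) (v : Fin n → ℝ) : gg C (-v) = gg C v := by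
  have key : ∀ w : Fin n → ℝ, ∀ ρ : ℝ, w ∈ ρ • (C - C) → -w ∈ ρ • (C - C) := by
    intro w ρ hw
    obtain ⟨b, hb, rfl⟩ := Set.mem_smul_set.mp hw
    exact Set.mem_smul_set.mpr ⟨-b, neg_mem_sub hb, by rw [smul_neg]⟩
  unfold gg ggs
  congr 1
  ext ρ
  exact and_congr_right fun _ => ⟨fun h => by simpa using key _ _ h, fun h => key _ _ h⟩

lemma gg_zero (hC : IsBody C) : gg C 0 = 0 := by
  have : ggs C (0 : Fin n → ℝ) = Set.Ioi 0 := by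
    ext ρ
    simp only [ggs, Set.mem_setOf_eq, Set.mem_Ioi, and_iff_left_iff_imp]
    intro hρ
    exact Set.mem_smul_set.mpr ⟨0, zero_mem_sub hC, smul_zero ρ⟩
  rw [gg, this, csInf_Ioi]

lemma gg_combo (hC : IsBody C) {a b : ℝ} (ha : 0 ≤ a) (hb : 0 ≤ b) (hab : a + b = 1)
    (u v : Fin n → ℝ) : gg C (a • u + b • v) ≤ a * gg C u + b * gg C v := by
  rcases eq_or_lt_of_le ha with ha0 | ha0
  · have hb1 : b = 1 := by linarith
    rw [← ha0, hb1]; simp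
  rcases eq_or_lt_of_le hb with hb0 | hb0
  · have ha1 : a = 1 := by linarith
    rw [← hb0, ha1]; simp
  refine le_of_forall_pos_le_add fun ε hε => ?_
  obtain ⟨ρ1, hρ1mem, hρ1lt⟩ := exists_lt_of_csInf_lt (ggs_nonempty hC u)
    (show gg C u < gg C u + ε by linarith)
  obtain ⟨ρ2, hρ2mem, hρ2lt⟩ := exists_lt_of_csInf_lt (ggs_nonempty hC v)
    (show gg C v < gg C v + ε by linarith)
  obtain ⟨b1, hb1, hb1e⟩ := Set.mem_smul_set.mp hρ1mem.2
  obtain ⟨b2, hb2, hb2e⟩ := Set.mem_smul_set.mp hρ2mem.2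
  set τ := a * ρ1 + b * ρ2 with hτ
  have hτ0 : 0 < τ := by have := hρ1mem.1; have := hρ2mem.1; positivity
  have hmem : a • u + b • v ∈ τ • (C - C) := by
    have h1 : (0:ℝ) ≤ a * ρ1 / τ := div_nonneg (mul_nonneg ha hρ1mem.1.le) hτ0.le
    have h2 : (0:ℝ) ≤ b * ρ2 / τ := div_nonneg (mul_nonneg hb hρ2mem.1.le) hτ0.le
    have h3 : a * ρ1 / τ + b * ρ2 / τ = 1 := by
      rw [← add_div, hτ, div_self (ne_of_gt hτ0)]
    refine Set.mem_smul_set.mpr ⟨(a * ρ1 / τ) • b1 + (b * ρ2 / τ) • b2,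
      (sub_convex hC) hb1 hb2 h1 h2 h3, ?_⟩
    have e1 : τ * (a * ρ1 / τ) = a * ρ1 := by field_simp
    have e2 : τ * (b * ρ2 / τ) = b * ρ2 := by field_simp
    rw [smul_add, smul_smul, smul_smul, e1, e2, ← smul_smul, ← smul_smul, hb1e, hb2e]
  calc gg C (a • u + b • v) ≤ τ := gg_le_of_mem hτ0 hmem
  _ ≤ a * (gg C u + ε) + b * (gg C v + ε) := by
      rw [hτ]; have := hρ1mem.1; have := hρ2mem.1
      nlinarith [hρ1lt, hρ2lt]
  _ = a * gg C u + b * gg C v + ε := by linear_combination ε * hab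

lemma gg_norm_lower (hC : IsBody C) {M : ℝ} (hM : 0 < M)
    (hMB : ∀ b ∈ C - C, ‖b‖ ≤ M) (v : Fin n → ℝ) : ‖v‖ / M ≤ gg C v := by
  refine le_csInf (ggs_nonempty hC v) fun ρ hρ => ?_
  have hρ0 := hρ.1
  obtain ⟨b, hb, hbe⟩ := Set.mem_smul_set.mp hρ.2
  rw [div_le_iff₀ hM, ← hbe, norm_smul, Real.norm_eq_abs, abs_of_pos hρ0]
  nlinarith [hMB b hb, norm_nonneg b]

/-! ### Diameter via the gauge -/

lemma circR_segment (hC : IsBody C) (x y : Fin n → ℝ) :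
    circR (segment ℝ x y) C = gg C (y - x) := by
  unfold circR gg ggs
  congr 1
  ext ρ
  simp only [Set.mem_setOf_eq]
  refine and_congr_right fun hρ => ?_
  constructor
  · rintro ⟨t, ht⟩
    obtain ⟨c1, hc1, hx⟩ := mem_tr.mp (ht (left_mem_segment ℝ x y))
    obtain ⟨c2, hc2, hy⟩ := mem_tr.mp (ht (right_mem_segment ℝ x y))
    refine Set.mem_smul_set.mpr ⟨c2 - c1, Set.sub_mem_sub hc2 hc1, ?_⟩
    rw [hx, hy]; module
  · intro h
    obtain ⟨b, hb, hbe⟩ := Set.mem_smul_set.mp h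
    obtain ⟨c2, hc2, c1, hc1, hbd⟩ := Set.mem_sub.mp hb
    refine ⟨x - ρ • c1, ((hC.1.smul ρ).vadd (x - ρ • c1)).segment_subset ?_ ?_⟩
    · exact mem_tr.mpr ⟨c1, hc1, by module⟩
    · refine mem_tr.mpr ⟨c2, hc2, ?_⟩
      have : y - x = ρ • (c2 - c1) := by rw [hbd, hbe]
      rw [smul_sub] at this
      have : y = x + ρ • c2 - ρ • c1 := by
        rw [eq_comm, sub_eq_iff_eq_add]
        rw [sub_eq_iff_eq_add] at this
        calc x + ρ • c2 = (y - x) + x + ρ • c1 := by rw [this]; module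
        _ = y + ρ • c1 := by module
      rw [this]; module

/-- the set of widths of `K` w.r.t. `C` -/
def SD (K C : Set (Fin n → ℝ)) : Set ℝ :=
  {d : ℝ | ∃ x ∈ K, ∃ y ∈ K, d = 2 * gg C (y - x)}

lemma diamC_eq {K : Set (Fin n → ℝ)} (hC : IsBody C) : diamC K C = sSup (SD K C) := by
  unfold diamC SD
  congr 1
  ext d
  simp only [Set.mem_setOf_eq, circR_segment hC]

variable {K : Set (Fin n → ℝ)}

lemma sd_nonempty (hK : IsBody K) (hC : IsBody C) : (SD K C).Nonempty := by
  obtain ⟨x, hx⟩ := body_nonempty hK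
  exact ⟨2 * gg C (x - x), x, hx, x, hx, rfl⟩

lemma sd_bddAbove (hK : IsBody K) (hC : IsBody C) : BddAbove (SD K C) := by
  obtain ⟨ρ', hρ'0, t', ht'⟩ := acirc_nonempty hK.2.1.isBounded hC
  refine ⟨2 * ρ', fun d hd => ?_⟩
  obtain ⟨x, hx, y, hy, rfl⟩ := hd
  have h1 : gg C (y - x) ≤ ρ' := by
    obtain ⟨c1, hc1, hxe⟩ := mem_tr.mp (ht' hx)
    obtain ⟨c2, hc2, hye⟩ := mem_tr.mp (ht' hy)
    refine gg_le_of_mem hρ'0 (Set.mem_smul_set.mpr ⟨c2 - c1, Set.sub_mem_sub hc2 hc1, ?_⟩)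
    rw [hxe, hye]; module
  linarith

lemma pair_le (hK : IsBody K) (hC : IsBody C) {x y : Fin n → ℝ} (hx : x ∈ K) (hy : y ∈ K) :
    2 * gg C (y - x) ≤ diamC K C := by
  rw [diamC_eq hC]
  exact le_csSup (sd_bddAbove hK hC) ⟨x, hx, y, hy, rfl⟩

lemma diamC_nonneg (hK : IsBody K) (hC : IsBody C) : 0 ≤ diamC K C := by
  obtain ⟨x, hx⟩ := body_nonempty hK
  have := pair_le hK hC hx hx
  nlinarith [gg_nonneg C (x - x)]

lemma diamC_pos (hn : 0 < n) (hK : IsBody K) (hC : IsBody C) : 0 < diamC K C := by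
  haveI : Nonempty (Fin n) := ⟨⟨0, hn⟩⟩
  obtain ⟨a, δK, hδK, hballK⟩ := body_ball hK
  obtain ⟨M, hM0, hMB⟩ := bounded_norm_bound (sub_compact hC).isBounded
  set e : Fin n → ℝ := fun _ => 1 with he
  have hne : ‖e‖ = 1 := by rw [he, pi_norm_const]; norm_num
  have hx2 : a + (δK/2) • e ∈ K := by
    refine hballK ?_
    rw [mem_ball, dist_eq_norm, add_sub_cancel_left, norm_smul, hne,
      Real.norm_eq_abs, abs_of_pos (by positivity)]
    linarith
  have hx1 : a ∈ K := hballK (mem_ball_self hδK)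
  have hnrm : ‖(a + (δK/2) • e) - a‖ = δK / 2 := by
    rw [add_sub_cancel_left, norm_smul, hne, Real.norm_eq_abs, abs_of_pos (by positivity)]
    ring
  have := pair_le hK hC hx1 hx2
  have hlow := gg_norm_lower hC hM0 hMB ((a + (δK/2) • e) - a)
  rw [hnrm] at hlow
  have : 0 < δK / 2 / M := by positivity
  linarith [pair_le hK hC hx1 hx2]

lemma pair_mem (hn : 0 < n) (hK : IsBody K) (hC : IsBody C) {x y : Fin n → ℝ}
    (hx : x ∈ K) (hy : y ∈ K) : y - x ∈ (diamC K C / 2) • (C - C) := by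
  refine mem_of_gg_le hC (by linarith [diamC_pos hn hK hC]) ?_
  linarith [pair_le hK hC hx hy]

/-- the diameter dominates twice any admissible inradius factor -/
lemma two_inr_le_diam (hn : 0 < n) (hK : IsBody K) (hC : IsBody C)
    {ρ : ℝ} (hρ : ρ ∈ Ainr K C) : 2 * ρ ≤ diamC K C := by
  obtain ⟨hρ0, a, ha⟩ := hρ
  rcases eq_or_lt_of_le hρ0 with h0 | h0
  · rw [← h0]; simpa using diamC_nonneg hK hC
  obtain ⟨b0, hb0mem, hb0max'⟩ := (sub_compact hC).exists_isMaxOn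
    ⟨0, zero_mem_sub hC⟩ continuous_norm.continuousOn
  have hb0max : ∀ b ∈ C - C, ‖b‖ ≤ ‖b0‖ := fun b hb => hb0max' hb
  have hM0 : 0 < ‖b0‖ := by
    obtain ⟨δ, hδ, hball⟩ := ball_subset_sub hC
    haveI : Nonempty (Fin n) := ⟨⟨0, hn⟩⟩
    set e : Fin n → ℝ := fun _ => 1 with he
    have hne : ‖e‖ = 1 := by rw [he, pi_norm_const]; norm_num
    have : (δ/2) • e ∈ C - C := hball (by
      rw [mem_ball, dist_eq_norm, sub_zero, norm_smul, hne, Real.norm_eq_abs,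
        abs_of_pos (by positivity)]
      linarith)
    have := hb0max _ this
    rw [norm_smul, hne, Real.norm_eq_abs, abs_of_pos (by positivity)] at this
    linarith
  obtain ⟨c2, hc2, c1, hc1, hbd⟩ := Set.mem_sub.mp hb0mem
  have hx : a + ρ • c1 ∈ K := ha (mem_tr.mpr ⟨c1, hc1, rfl⟩)
  have hy : a + ρ • c2 ∈ K := ha (mem_tr.mpr ⟨c2, hc2, rfl⟩)
  have hpl := pair_le hK hC hx hy
  have hsub : (a + ρ • c2) - (a + ρ • c1) = ρ • b0 := by rw [← hbd]; module
  rw [hsub] at hpl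
  have hlow := gg_norm_lower hC hM0 hb0max (ρ • b0)
  rw [norm_smul, Real.norm_eq_abs, abs_of_pos h0, mul_div_assoc,
    div_self (ne_of_gt hM0), mul_one] at hlow
  linarith

/-! ### Completeness -/

lemma convexHull_insert_body (hK : IsBody K) (p : Fin n → ℝ) :
    IsBody (convexHull ℝ (insert p K)) := by
  have hJ : convexHull ℝ (insert p K) =
      (fun q : ℝ × (Fin n → ℝ) => q.1 • p + (1 - q.1) • q.2) '' (Set.Icc (0:ℝ) 1 ×ˢ K) := by
    rw [convexHull_insert (body_nonempty hK), hK.1.convexHull_eq]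
    ext v
    rw [mem_convexJoin]
    simp only [Set.mem_singleton_iff, Set.mem_image, Set.mem_prod, Set.mem_Icc, Prod.exists,
      exists_eq_left]
    constructor
    · rintro ⟨z, hz, hv⟩
      rw [segment_eq_image ℝ p z] at hv
      obtain ⟨θ, hθ, hve⟩ := hv
      exact ⟨1 - θ, z, ⟨⟨by linarith [hθ.2], by linarith [hθ.1]⟩, hz⟩, by
        simp only [sub_sub_cancel]; exact hve⟩
    · rintro ⟨a, z, ⟨⟨ha0, ha1⟩, hz⟩, hve⟩
      refine ⟨z, hz, ?_⟩
      rw [segment_eq_image ℝ p z]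
      exact ⟨1 - a, ⟨by linarith, by linarith⟩, by simp only [sub_sub_cancel]; exact hve⟩
  refine ⟨convex_convexHull ℝ _, ?_, ?_⟩
  · rw [hJ]
    exact (isCompact_Icc.prod hK.2.1).image
      ((continuous_fst.smul continuous_const).add
        ((continuous_const.sub continuous_fst).smul continuous_snd))
  · obtain ⟨x, hx⟩ := hK.2.2
    exact ⟨x, interior_mono ((Set.subset_insert p K).trans (subset_convexHull ℝ _)) hx⟩

lemma complete_far (hK : IsBody K) (hC : IsBody C) (hcomp : IsDiamComplete K C)
    {p : Fin n → ℝ} (hp : p ∉ K) : ∃ y ∈ K, diamC K C < 2 * gg C (p - y) := by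
  set K' := convexHull ℝ (insert p K) with hK'def
  have hK' : IsBody K' := convexHull_insert_body hK p
  have hsub : K ⊆ K' := (Set.subset_insert p K).trans (subset_convexHull ℝ _)
  have hpK' : p ∈ K' := subset_convexHull ℝ _ (Set.mem_insert p K)
  have hss : K ⊂ K' := ⟨hsub, fun h => hp (h hpK')⟩
  have hlt := hcomp K' hK' hss
  rw [diamC_eq hC (K := K')] at hlt
  obtain ⟨d, hd, hDd⟩ := exists_lt_of_lt_csSup (s := SD K' C) ⟨2 * gg C (p - p), p, hpK', p, hpK', rfl⟩ hlt
  obtain ⟨x', hx', y', hy', rfl⟩ := hd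
  -- reduce to generators via convexity of the gauge
  have hconv1 : ConvexOn ℝ K' (fun x => gg C (y' - x)) := by
    refine ⟨convex_convexHull ℝ _, fun x _ y _ a b ha hb hab => ?_⟩
    show gg C (y' - (a • x + b • y)) ≤ a • gg C (y' - x) + b • gg C (y' - y)
    have he : y' - (a • x + b • y) = a • (y' - x) + b • (y' - y) := by
      have : a • (y' - x) + b • (y' - y) = (a + b) • y' - (a • x + b • y) := by module
      rw [this, hab, one_smul]
    rw [he]
    simpa [smul_eq_mul] using gg_combo hC ha hb hab (y' - x) (y' - y)
  obtain ⟨x0, hx0, hgx0⟩ := hconv1.exists_ge_of_mem_convexHull (subset_convexHull ℝ _) hx'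
  have hconv2 : ConvexOn ℝ K' (fun y => gg C (y - x0)) := by
    refine ⟨convex_convexHull ℝ _, fun x _ y _ a b ha hb hab => ?_⟩
    show gg C ((a • x + b • y) - x0) ≤ a • gg C (x - x0) + b • gg C (y - x0)
    have he : (a • x + b • y) - x0 = a • (x - x0) + b • (y - x0) := by
      have : a • (x - x0) + b • (y - x0) = (a • x + b • y) - (a + b) • x0 := by module
      rw [this, hab, one_smul]
    rw [he]
    simpa [smul_eq_mul] using gg_combo hC ha hb hab (x - x0) (y - x0)
  obtain ⟨y0, hy0, hgy0⟩ := hconv2.exists_ge_of_mem_convexHull (subset_convexHull ℝ _) hy'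
  have hkey : diamC K C < 2 * gg C (y0 - x0) := by
    have h1 : gg C (y' - x') ≤ gg C (y' - x0) := hgx0
    have h2 : gg C (y' - x0) ≤ gg C (y0 - x0) := hgy0
    linarith
  rcases Set.mem_insert_iff.mp hx0 with hx0p | hx0K
  · rcases Set.mem_insert_iff.mp hy0 with hy0p | hy0K
    · exfalso
      rw [hx0p, hy0p, sub_self, gg_zero hC] at hkey
      have := diamC_nonneg hK hC
      linarith
    · refine ⟨y0, hy0K, ?_⟩
      rw [hx0p] at hkey
      rw [← gg_neg C (p - y0)]
      simpa [neg_sub] using hkey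
  · rcases Set.mem_insert_iff.mp hy0 with hy0p | hy0K
    · refine ⟨x0, hx0K, ?_⟩
      rw [hy0p] at hkey
      exact hkey
    · exfalso
      have := pair_le hK hC hx0K hy0K
      linarith

/-- for a complete body, the inradius and circumradius w.r.t. the difference body
add up to at least the halved diameter (admissible-factor version). -/
lemma inr_circ_sub_ge (hn : 0 < n) (hK : IsBody K) (hC : IsBody C)
    (hcomp : IsDiamComplete K C) :
    diamC K C / 2 - circR K (C - C) ≤ inrad K (C - C) := by
  set D := diamC K C with hD
  have hD0 : 0 < D := diamC_pos hn hK hC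
  have hCC : IsBody (C - C) := ⟨sub_convex hC, sub_compact hC, by
    obtain ⟨δ, hδ, hball⟩ := ball_subset_sub hC
    exact ⟨0, (by
      have : ball (0 : Fin n → ℝ) δ ⊆ interior (C - C) :=
        interior_maximal hball isOpen_ball
      exact this (mem_ball_self hδ))⟩⟩
  have hkey : ∀ ρ' ∈ Acirc K (C - C), D / 2 - ρ' ≤ inrad K (C - C) := by
    rintro ρ' ⟨hρ'0, z, hz⟩
    rcases le_or_gt (D/2) ρ' with hc | hc
    · have := inrad_nonneg K (C - C)
      linarith
    · refine le_csSup (ainr_bddAbove hn hK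
        (ball_subset_sub hC).choose_spec.1 (ball_subset_sub hC).choose_spec.2)
        ⟨by linarith, z, fun v hv => ?_⟩
      obtain ⟨b, hb, hve⟩ := mem_tr.mp hv
      by_contra hvK
      obtain ⟨y, hy, hylt⟩ := complete_far hK hC hcomp hvK
      have hzy : z - y ∈ ρ' • (C - C) := by
        obtain ⟨b', hb', hye⟩ := mem_tr.mp (hz hy)
        refine Set.mem_smul_set.mpr ⟨-b', neg_mem_sub hb', ?_⟩
        rw [hye]; module
      have hvy : v - y ∈ (D/2) • (C - C) := by
        obtain ⟨b1, hb1, hb1e⟩ := Set.mem_smul_set.mp hzy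
        have h1 : (0:ℝ) ≤ ρ' / (D/2) := by positivity
        have h2 : (0:ℝ) ≤ (D/2 - ρ') / (D/2) := by
          apply div_nonneg _ (by linarith); linarith
        have h3 : ρ' / (D/2) + (D/2 - ρ') / (D/2) = 1 := by
          field_simp
          ring
        have hcomb := (sub_convex hC) hb1 hb (h1) (h2) (h3)
        refine Set.mem_smul_set.mpr ⟨_, hcomb, ?_⟩
        rw [smul_add, smul_smul, smul_smul]
        have e1 : D/2 * (ρ' / (D/2)) = ρ' := by field_simp
        have e2 : D/2 * ((D/2 - ρ') / (D/2)) = D/2 - ρ' := by field_simp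
        rw [e1, e2, hb1e, hve]
        module
      have : 2 * gg C (v - y) ≤ D := by
        have := gg_le_of_mem (C := C) (by linarith : (0:ℝ) < D/2) hvy
        linarith
      linarith
  rcases acirc_nonempty hK.2.1.isBounded hCC with ⟨ρ', hρ'⟩
  have : ∀ ρ' ∈ Acirc K (C - C), D / 2 - inrad K (C - C) ≤ ρ' := by
    intro τ hτ
    have := hkey τ hτ
    linarith
  have hlb := le_csInf ⟨ρ', hρ'⟩ this
  rw [circR_eq]
  linarith

lemma sub_body (hC : IsBody C) : IsBody (C - C) := by
  refine ⟨sub_convex hC, sub_compact hC, ?_⟩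
  obtain ⟨δ, hδ, hball⟩ := ball_subset_sub hC
  exact ⟨0, interior_maximal hball isOpen_ball (mem_ball_self hδ)⟩

/-- F5: `(1 + s(C)) · r(K, C-C) ≤ s(C) · r(K, C)` -/
lemma inr_sub_le (hn : 0 < n) (hK : IsBody K) (hC : IsBody C) :
    (1 + asym C) * inrad K (C - C) ≤ asym C * inrad K C := by
  obtain ⟨c0, δ, hδ, hball⟩ := body_ball hC
  obtain ⟨δ', hδ', hball'⟩ := ball_subset_sub hC
  have hsC1 : 1 ≤ asym C := one_le_asym hn hC
  have hsCne : (Acirc (-C) C).Nonempty := acirc_nonempty hC.2.1.neg.isBounded hC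
  have hr0 : 0 ≤ inrad K C := inrad_nonneg K C
  -- each admissible ρ for B := C - C gives an admissible factor for C
  have key : ∀ ρ ∈ Ainr K (C - C), (1 + asym C) * ρ ≤ asym C * inrad K C := by
    rintro ρ ⟨hρ0, x, hx⟩
    rcases eq_or_lt_of_le hρ0 with h0 | h0
    · rw [← h0]; nlinarith
    have step : ∀ σ ∈ Acirc (-C) C, ρ * (1 + σ) / σ ≤ inrad K C := by
      rintro σ ⟨hσ0, u, hu⟩
      have hmem : ρ * (1 + σ) / σ ∈ Ainr K C := by
        refine ⟨by positivity, x + (ρ/σ) • u, fun w hw => ?_⟩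
        obtain ⟨c, hc, rfl⟩ := mem_tr.mp hw
        have hnc : -c ∈ u +ᵥ σ • C := hu (Set.neg_mem_neg.mpr hc)
        obtain ⟨c'', hc'', hnce⟩ := mem_tr.mp hnc
        refine hx (mem_tr.mpr ⟨c - c'', Set.sub_mem_sub hc hc'', ?_⟩)
        -- w = x + (ρ/σ)•u + (ρ(1+σ)/σ)•c = x + ρ•(c - c'')
        have hc''e : σ • c'' = -c - u := by rw [eq_sub_iff_add_eq, hnce]; abel
        have hexp : ρ • (c - c'') = (ρ * (1 + σ) / σ) • c + (ρ/σ) • u := by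
          have h1 : c'' = (σ⁻¹ * σ) • c'' := by
            rw [inv_mul_cancel₀ (ne_of_gt hσ0), one_smul]
          have h2 : c'' = -(σ⁻¹ • c) - σ⁻¹ • u := by
            rw [h1, mul_smul, hc''e]; module
          rw [h2]
          have e1 : ρ * (1 + σ) / σ = ρ + ρ * σ⁻¹ := by field_simp; ring
          have e2 : ρ / σ = ρ * σ⁻¹ := by rw [div_eq_mul_inv]
          rw [e1, e2]
          module
        rw [hexp]
        abel
      exact le_csSup (ainr_bddAbove hn hK hδ hball) hmem
    -- pass to the infimum over σ
    set r := inrad K C with hr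
    have hrρ : ρ < r := by
      obtain ⟨σ0, hσ0⟩ := hsCne
      have := step σ0 hσ0
      have hσ01 : 1 ≤ σ0 := one_le_of_mem_asym hn hC hσ0
      have h2 : ρ < ρ * (1 + σ0) / σ0 := by
        rw [lt_div_iff₀ (by linarith)]
        nlinarith
      linarith
    have hlb : ρ / (r - ρ) ≤ asym C := by
      refine le_csInf hsCne fun σ hσ => ?_
      have := step σ hσ
      have hσ0 := hσ.1
      rw [div_le_iff₀ (by linarith)]
      rw [div_le_iff₀ hσ0] at this
      nlinarith
    rw [div_le_iff₀ (by linarith)] at hlb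
    nlinarith
  -- conclude by csSup over Ainr K (C - C)
  have h2 : inrad K (C - C) ≤ asym C * inrad K C / (1 + asym C) :=
    csSup_le ⟨0, ainr_zero_mem (body_nonempty hK) (body_nonempty (sub_body hC))⟩
      fun ρ hρ => by
        rw [le_div_iff₀ (by linarith)]
        nlinarith [key ρ hρ]
  rw [le_div_iff₀ (by linarith)] at h2
  nlinarith

/-- F6: `R(K,C) ≤ (1 + s(C)) · R(K, C-C)` -/
lemma circ_le_circ_sub (hn : 0 < n) (hK : IsBody K) (hC : IsBody C) :
    circR K C ≤ (1 + asym C) * circR K (C - C) := by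
  have hsC1 : 1 ≤ asym C := one_le_asym hn hC
  have hsCne : (Acirc (-C) C).Nonempty := acirc_nonempty hC.2.1.neg.isBounded hC
  have hBne : (Acirc K (C - C)).Nonempty := acirc_nonempty hK.2.1.isBounded (sub_body hC)
  have key : ∀ ρ' ∈ Acirc K (C - C), circR K C ≤ (1 + asym C) * ρ' := by
    rintro ρ' ⟨hρ'0, z, hz⟩
    have step : ∀ σ ∈ Acirc (-C) C, circR K C ≤ (1 + σ) * ρ' := by
      rintro σ ⟨hσ0, u, hu⟩
      have hmem : (1 + σ) * ρ' ∈ Acirc K C := by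
        refine ⟨by positivity, z + ρ' • u, fun w hw => ?_⟩
        obtain ⟨b, hb, rfl⟩ := mem_tr.mp (hz hw)
        obtain ⟨c, hc, c', hc', hbe⟩ := Set.mem_sub.mp hb
        have hnc : -c' ∈ u +ᵥ σ • C := hu (Set.neg_mem_neg.mpr hc')
        obtain ⟨c2, hc2, hnce⟩ := mem_tr.mp hnc
        have hcomb : (1/(1+σ)) • c + (σ/(1+σ)) • c2 ∈ C := by
          refine hC.1 hc hc2 (by positivity) (by positivity) ?_
          field_simp
        refine mem_tr.mpr ⟨_, hcomb, ?_⟩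
        -- z + ρ'•b = (z + ρ'•u) + ((1+σ)ρ')•((1/(1+σ))•c + (σ/(1+σ))•c2)
        have hb2 : b = c + u + σ • c2 := by
          rw [← hbe, sub_eq_add_neg, hnce]; abel
        have e1 : (1+σ) * ρ' * (1/(1+σ)) = ρ' := by field_simp
        have e2 : (1+σ) * ρ' * (σ/(1+σ)) = ρ' * σ := by field_simp
        have herhs : ((1+σ) * ρ') • ((1/(1+σ)) • c + (σ/(1+σ)) • c2)
            = ρ' • c + (ρ' * σ) • c2 := by
          rw [smul_add, smul_smul, smul_smul, e1, e2]
        rw [hb2, herhs]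
        module
      exact csInf_le (acirc_bddBelow K C) hmem
    have hlb : circR K C / ρ' - 1 ≤ asym C := by
      refine le_csInf hsCne fun σ hσ => ?_
      have := step σ hσ
      rw [sub_le_iff_le_add, div_le_iff₀ hρ'0]
      nlinarith
    rw [sub_le_iff_le_add, div_le_iff₀ hρ'0] at hlb
    nlinarith
  have hlb2 : circR K C / (1 + asym C) ≤ circR K (C - C) := by
    refine le_csInf hBne fun ρ' hρ' => ?_
    rw [div_le_iff₀ (by linarith)]
    nlinarith [key ρ' hρ']
  rw [div_le_iff₀ (by linarith)] at hlb2
  nlinarith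

/-- F7: `2 R(K,C-C) (1 + s(K)) ≤ s(K) · D(K,C)` -/
lemma circ_sub_le_diam (hn : 0 < n) (hK : IsBody K) (hC : IsBody C) :
    2 * circR K (C - C) * (1 + asym K) ≤ asym K * diamC K C := by
  set D := diamC K C with hD
  have hD0 : 0 < D := diamC_pos hn hK hC
  have hsne : (Acirc (-K) K).Nonempty := acirc_nonempty hK.2.1.neg.isBounded hK
  have key : ∀ ρ ∈ Acirc (-K) K, circR K (C - C) ≤ ρ * D / (2 * (1 + ρ)) := by
    rintro ρ ⟨hρ0, t, ht⟩
    have h1ρ : (0:ℝ) < 1 + ρ := by linarith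
    have hmem : ρ * D / (2 * (1 + ρ)) ∈ Acirc K (C - C) := by
      refine ⟨by positivity, (-(1+ρ)⁻¹) • t, fun x hx => ?_⟩
      obtain ⟨y, hy, hye⟩ := mem_tr.mp (ht (Set.neg_mem_neg.mpr hx))
      -- -x = t + ρ•y  with y ∈ K
      have hxy : x - y ∈ (D/2) • (C - C) := pair_mem hn hK hC hy hx
      obtain ⟨b, hb, hbe⟩ := Set.mem_smul_set.mp hxy
      refine mem_tr.mpr ⟨b, hb, ?_⟩
      -- x = -(1+ρ)⁻¹•t + (ρD/(2(1+ρ)))•b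
      have hyx : ρ • y = -x - t := by rw [eq_sub_iff_add_eq, hye]; abel
      have hx_m : x + (1+ρ)⁻¹ • t = (ρ/(1+ρ)) • (x - y) := by
        have h5 : ρ • (x - y) = (1+ρ) • x + t := by
          rw [smul_sub, hyx]; module
        have h6 : (ρ/(1+ρ)) • (x - y) = (1+ρ)⁻¹ • (ρ • (x - y)) := by
          rw [smul_smul]
          congr 1
          field_simp
        rw [h6, h5, smul_add, smul_smul, inv_mul_cancel₀ (ne_of_gt h1ρ), one_smul]
      have : x = (-(1+ρ)⁻¹) • t + ((ρ/(1+ρ)) * (D/2)) • b := by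
        rw [← smul_smul, hbe, ← hx_m]
        module
      rw [this]
      congr 2
      field_simp
    exact csInf_le (acirc_bddBelow K (C - C)) hmem
  set RB := circR K (C - C) with hRB
  have hRBD : RB < D / 2 := by
    obtain ⟨ρ0, hρ0⟩ := hsne
    have h1 := key ρ0 hρ0
    have hρ00 := hρ0.1
    have : ρ0 * D / (2 * (1 + ρ0)) < D / 2 := by
      rw [div_lt_div_iff₀ (by linarith) (by norm_num)]
      nlinarith
    linarith
  have hRB0 : 0 ≤ RB := circR_nonneg K (C - C)
  have hlb : 2 * RB / (D - 2 * RB) ≤ asym K := by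
    refine le_csInf hsne fun ρ hρ => ?_
    have h1 := key ρ hρ
    have hρ0 := hρ.1
    rw [div_le_iff₀ (by linarith)]
    rw [le_div_iff₀ (by positivity)] at h1
    nlinarith
  rw [div_le_iff₀ (by linarith)] at hlb
  nlinarith

/-- F9 (erosion): `s(C)·r(K,C) + R(K,C) ≤ (1+s(C))·D(K,C)/2`. -/
lemma item4_aux (hn : 0 < n) (hK : IsBody K) (hC : IsBody C) :
    asym C * inrad K C + circR K C ≤ (1 + asym C) * (diamC K C / 2) := by
  set D := diamC K C with hD
  have hD0 : 0 < D := diamC_pos hn hK hC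
  have hsC1 : 1 ≤ asym C := one_le_asym hn hC
  have hsCne : (Acirc (-C) C).Nonempty := acirc_nonempty hC.2.1.neg.isBounded hC
  obtain ⟨c0, δ, hδ, hball⟩ := body_ball hC
  have hc0 : c0 ∈ C := hball (mem_ball_self hδ)
  -- core: for every admissible inradius factor ρ and asymmetry factor σ
  have core : ∀ ρ ∈ Ainr K C, ∀ σ ∈ Acirc (-C) C, circR K C + σ * ρ ≤ (1 + σ) * (D / 2) := by
    rintro ρ ⟨hρ0, a, ha⟩ σ ⟨hσ0, u, hu⟩
    have hρD : 2 * ρ ≤ D := two_inr_le_diam hn hK hC ⟨hρ0, a, ha⟩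
    set A : Set (Fin n → ℝ) := (D/2) • C + (D/2 - ρ) • (-C) with hA
    have hAconv : Convex ℝ A := ((hC.1.smul _).add (hC.1.neg.smul _))
    have hAcl : IsClosed A := ((hC.2.1.smul _).add (hC.2.1.neg.smul _)).isClosed
    -- every point of K, translated by -a, lies in A
    have hvA : ∀ v ∈ K, v - a ∈ A := by
      intro v hv
      by_contra hnot
      obtain ⟨f, u0, hfa, hfu⟩ := geometric_hahn_banach_closed_point hAconv hAcl hnot
      obtain ⟨m, hm, hmax'⟩ := (hC.2.1.neg).exists_isMaxOn ⟨-c0, Set.neg_mem_neg.mpr hc0⟩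
        f.continuous.continuousOn
      have hmax : ∀ b ∈ -C, f b ≤ f m := fun b hb => hmax' hb
      have hmK : a + ρ • (-m) ∈ K := by
        refine ha (mem_tr.mpr ⟨-m, ?_, rfl⟩)
        rw [← Set.mem_neg]
        simpa using hm
      have hpair : v - (a + ρ • (-m)) ∈ (D/2) • (C - C) := pair_mem hn hK hC hmK hv
      obtain ⟨b, hb, hbe⟩ := Set.mem_smul_set.mp hpair
      obtain ⟨c, hc, c', hc', hbd⟩ := Set.mem_sub.mp hb
      -- (v - a) + ρ•m = (D/2)•c + (D/2)•(-c')
      have hkey : (v - a) + ρ • m = (D/2) • c + (D/2) • (-c') := by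
        have : v - (a + ρ • (-m)) = (D/2) • (c - c') := by rw [hbd]; exact hbe.symm
        calc (v - a) + ρ • m = v - (a + ρ • (-m)) := by module
        _ = (D/2) • (c - c') := this
        _ = (D/2) • c + (D/2) • (-c') := by module
      have hfk := congrArg f hkey
      simp only [map_add, map_smul, smul_eq_mul] at hfk
      -- f (v - a) ≤ f p0 for p0 ∈ A, contradiction
      have hfc' : f (-c') ≤ f m := hmax _ (Set.neg_mem_neg.mpr hc')
      have hfm : f (ρ • m) = ρ * f m := by rw [map_smul, smul_eq_mul]
      have hp0 : (D/2) • c + (D/2 - ρ) • m ∈ A :=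
        Set.add_mem_add (Set.smul_mem_smul_set hc) (Set.smul_mem_smul_set hm)
      have hfp0 := hfa _ hp0
      simp only [map_add, map_smul, smul_eq_mul] at hfp0
      have hfva : f (v - a) + ρ * f m = D/2 * f c + D/2 * f (-c') := by
        have := congrArg f hkey
        simpa [map_add, map_smul, smul_eq_mul] using this
      nlinarith [hfu]
    -- conclude the circumradius bound
    have hmem : D/2 + σ * (D/2 - ρ) ∈ Acirc K C := by
      have hμ : 0 < D/2 + σ * (D/2 - ρ) := by nlinarith
      set μ := D/2 + σ * (D/2 - ρ) with hμdef
      refine ⟨hμ, a + (D/2 - ρ) • u, fun v hv => ?_⟩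
      obtain ⟨w1, hw1, w2, hw2, hwe⟩ := Set.mem_add.mp (hvA v hv)
      obtain ⟨c, hc, hce⟩ := Set.mem_smul_set.mp hw1
      obtain ⟨mc, hmc, hmce⟩ := Set.mem_smul_set.mp hw2
      obtain ⟨c₂, hc₂, hm2⟩ := mem_tr.mp (hu hmc)
      have hμ0 : (0:ℝ) < μ := hμ
      have h1 : (0:ℝ) ≤ D/2/μ := by positivity
      have h2 : (0:ℝ) ≤ σ * (D/2 - ρ) / μ := by
        apply div_nonneg _ hμ0.le
        nlinarith
      have h3 : D/2/μ + σ * (D/2 - ρ) / μ = 1 := by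
        rw [← add_div, hμdef, div_self (ne_of_gt hμ)]
      have hcomb : (D/2/μ) • c + (σ * (D/2 - ρ) / μ) • c₂ ∈ C := hC.1 hc hc₂ h1 h2 h3
      refine mem_tr.mpr ⟨_, hcomb, ?_⟩
      have e1 : μ * (D/2/μ) = D/2 := by field_simp
      have e2 : μ * (σ * (D/2 - ρ) / μ) = σ * (D/2 - ρ) := by field_simp
      have hμc : μ • ((D/2/μ) • c + (σ * (D/2 - ρ) / μ) • c₂)
          = (D/2) • c + (σ * (D/2 - ρ)) • c₂ := by
        rw [smul_add, smul_smul, smul_smul, e1, e2]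
      have hva : v - a = (D/2) • c + (D/2 - ρ) • (u + σ • c₂) := by
        rw [← hm2, hce, hmce]
        exact hwe.symm
      have hv2 : v = ((D/2) • c + (D/2 - ρ) • (u + σ • c₂)) + a := by
        rw [← hva]; module
      rw [hv2, hμc]
      module
    have := csInf_le (acirc_bddBelow K C) hmem
    rw [circR_eq]
    nlinarith [this]
  -- pass to infima/suprema
  have step2 : ∀ ρ ∈ Ainr K C, circR K C + asym C * ρ ≤ (1 + asym C) * (D / 2) := by
    intro ρ hρ
    have hρ0 := hρ.1
    have hρD : 2 * ρ ≤ D := two_inr_le_diam hn hK hC hρ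
    rcases eq_or_lt_of_le hρD with hρD' | hρD'
    · -- ρ = D/2
      obtain ⟨σ0, hσ0⟩ := hsCne
      have h1 := core ρ hρ σ0 hσ0
      have hσ01 : 1 ≤ σ0 := one_le_of_mem_asym hn hC hσ0
      nlinarith
    · have hlb : (circR K C - D/2) / (D/2 - ρ) ≤ asym C := by
        refine le_csInf hsCne fun σ hσ => ?_
        have h1 := core ρ hρ σ hσ
        rw [div_le_iff₀ (by linarith)]
        nlinarith
      rw [div_le_iff₀ (by linarith)] at hlb
      nlinarith
  have hr : inrad K C ≤ ((1 + asym C) * (D / 2) - circR K C) / asym C := by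
    refine csSup_le ⟨0, ainr_zero_mem (body_nonempty hK) (body_nonempty hC)⟩ fun ρ hρ => ?_
    rw [le_div_iff₀ (by linarith)]
    nlinarith [step2 ρ hρ]
  rw [le_div_iff₀ (by linarith)] at hr
  nlinarith

end Stmt11Aux

open Stmt11Aux Set Metric in
theorem stmt11 {n : ℕ} (K C : Set (Fin n → ℝ)) (hK : IsBody K) (hC : IsBody C)
    (hcomp : IsDiamComplete K C) :
    (1 + asym K) * inrad K (-C) ≤ inrad K (-C) + circR K C ∧
    inrad K (-C) + circR K C ≤ ((1 + asym K) / asym K) * circR K C ∧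
    ((1 + asym K) / asym K) * circR K C ≤ asym C * inrad K C + circR K C ∧
    asym C * inrad K C + circR K C ≤ (1 / 2) * (1 + asym C) * diamC K C := by
  rcases Nat.eq_zero_or_pos n with hn | hn
  · -- degenerate case `n = 0`
    subst hn
    have hKne : K.Nonempty := body_nonempty hK
    have hCne : C.Nonempty := body_nonempty hC
    have hzero : ∀ X Y : Set (Fin 0 → ℝ), Y.Nonempty → circR X Y = 0 := by
      intro X Y hY
      have hset : {ρ : ℝ | 0 < ρ ∧ ∃ t : Fin 0 → ℝ, X ⊆ t +ᵥ ρ • Y} = Set.Ioi 0 := by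
        ext ρ
        simp only [Set.mem_setOf_eq, Set.mem_Ioi, and_iff_left_iff_imp]
        intro hρ
        obtain ⟨c, hc⟩ := hY
        exact ⟨0, fun x _ => mem_tr.mpr ⟨c, hc, Subsingleton.elim _ _⟩⟩
      rw [circR, hset, csInf_Ioi]
    have hKu : K = Set.univ :=
      Set.eq_univ_iff_forall.mpr fun x => by
        obtain ⟨k, hk⟩ := hKne
        rwa [Subsingleton.elim x k]
    have hinr : ∀ Y : Set (Fin 0 → ℝ), inrad K Y = 0 := by
      intro Y
      have hset : {ρ : ℝ | 0 ≤ ρ ∧ ∃ t : Fin 0 → ℝ, t +ᵥ ρ • Y ⊆ K} = Set.Ici 0 := by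
        ext ρ
        simp only [Set.mem_setOf_eq, Set.mem_Ici, and_iff_left_iff_imp]
        intro _
        exact ⟨0, by rw [hKu]; exact Set.subset_univ _⟩
      have hnb : ¬BddAbove (Set.Ici (0:ℝ)) := by
        rintro ⟨b, hb⟩
        have h1 : max b 0 + 1 ≤ b := hb (by simp [Set.mem_Ici]; positivity)
        have h2 : b ≤ max b 0 := le_max_left b 0
        linarith
      rw [inrad, hset, Real.sSup_of_not_bddAbove hnb]
    have hdiam : diamC K C = 0 := by
      have hset : {d : ℝ | ∃ x ∈ K, ∃ y ∈ K, d = 2 * circR (segment ℝ x y) C} = {0} := by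
        ext d
        simp only [Set.mem_setOf_eq, Set.mem_singleton_iff]
        constructor
        · rintro ⟨x, _, y, _, rfl⟩
          rw [hzero _ _ hCne]; ring
        · rintro rfl
          obtain ⟨k, hk⟩ := hKne
          exact ⟨k, hk, k, hk, by rw [hzero _ _ hCne]; ring⟩
      rw [diamC, hset, csSup_singleton]
    have h1 : asym K = 0 := hzero _ _ hKne
    have h2 : asym C = 0 := hzero _ _ hCne
    have h3 : circR K C = 0 := hzero _ _ hCne
    rw [h1, h2, h3, hinr, hinr, hdiam]
    norm_num
  · -- main case `n ≥ 1`
    have hs1 : 1 ≤ asym K := one_le_asym hn hK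
    have hsC1 : 1 ≤ asym C := one_le_asym hn hC
    set s := asym K
    set sC := asym C
    set R := circR K C with hR
    set r := inrad K C
    set rm := inrad K (-C)
    set D := diamC K C
    set RB := circR K (C - C)
    set rB := inrad K (C - C)
    have hD0 : 0 < D := diamC_pos hn hK hC
    have hR0 : 0 ≤ R := circR_nonneg K C
    have hr0 : 0 ≤ r := inrad_nonneg K C
    have hrm0 : 0 ≤ rm := inrad_nonneg K (-C)
    have hRB0 : 0 ≤ RB := circR_nonneg K (C - C)
    have hrB0 : 0 ≤ rB := inrad_nonneg K (C - C)
    have hA : rm ≤ R / s := inrad_neg_le hn hK hC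
    have hF5 : (1 + sC) * rB ≤ sC * r := inr_sub_le hn hK hC
    have hF6 : R ≤ (1 + sC) * RB := circ_le_circ_sub hn hK hC
    have hF7 : 2 * RB * (1 + s) ≤ s * D := circ_sub_le_diam hn hK hC
    have hF8 : D / 2 - RB ≤ rB := inr_circ_sub_ge hn hK hC hcomp
    have hF9 : sC * r + R ≤ (1 + sC) * (D / 2) := item4_aux hn hK hC
    have hs0 : (0:ℝ) < s := by linarith
    have hAm : rm * s ≤ R := by
      rw [le_div_iff₀ hs0] at hA
      exact hA
    -- R ≤ s * (sC * r)
    have h1 : RB ≤ s * (D/2 - RB) := by nlinarith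
    have h2 : (1 + sC) * (D/2 - RB) ≤ sC * r := by nlinarith
    have hRs : R ≤ s * (sC * r) := by
      have h3 : R ≤ (1 + sC) * (s * (D/2 - RB)) := by nlinarith
      nlinarith
    have hdivmul : ((1 + s) / s) * R = R / s + R := by field_simp
    refine ⟨by nlinarith, ?_, ?_, by nlinarith⟩
    · rw [hdivmul]
      linarith
    · rw [hdivmul]
      have : R / s ≤ sC * r := by
        rw [div_le_iff₀ hs0]
        nlinarith
      linarith
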